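/- If M is aperiodic with stationary distribution π, then under the above construction, liminf_{k→∞} P^{k+m}(α, 𝒪) ≥ (1 − 2√δ_n) π S_n e > 0 for every α ∈ Δ; in particular, taking α = v, the point v is topologically aperiodic: liminf_{k→∞} P^k(v, 𝒪) > 0 for every open neighborhood 𝒪 of v. -/

import Mathlib

open Matrix Filter Topology
open scoped Classical

/-- The product `M(w) = M(w₁) ⋯ M(wₖ)` of a word. -/
def wordProd {s : ℕ} {Y : Type*} (M : Y → Matrix (Fin s) (Fin s) ℝ)
    {n : ℕ} (w : Fin n → Y) : Matrix (Fin s) (Fin s) ℝ :=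
  (List.ofFn (fun i => M (w i))).prod

/-- The k-step transition kernel of the α-chain. -/
noncomputable def Pker {s : ℕ} {Y : Type*} [Fintype Y]
    (M : Y → Matrix (Fin s) (Fin s) ℝ) (k : ℕ)
    (α : Fin s → ℝ) (A : Set (Fin s → ℝ)) : ℝ :=
  ∑ w : Fin k → Y,
    if ((∑ j, (α ᵥ* wordProd M w) j)⁻¹ • (α ᵥ* wordProd M w)) ∈ A
    then ∑ j, (α ᵥ* wordProd M w) j else 0

set_option linter.unusedSectionVars false

section helpers
variable {s : ℕ} {Y : Type*} [Fintype Y] (M : Y → Matrix (Fin s) (Fin s) ℝ)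

lemma listprod_nonneg (L : List (Matrix (Fin s) (Fin s) ℝ))
    (h : ∀ A ∈ L, ∀ i j, 0 ≤ A i j) : ∀ i j, 0 ≤ L.prod i j := by
  induction L with
  | nil => intro i j; simp [Matrix.one_apply]; positivity
  | cons A L ih =>
      intro i j
      rw [List.prod_cons, Matrix.mul_apply]
      refine Finset.sum_nonneg fun l _ => mul_nonneg (h A (by simp) i l) ?_
      exact ih (fun B hB => h B (by simp [hB])) l j

lemma wordProd_nonneg (hpos : ∀ y i j, 0 ≤ M y i j) {n : ℕ} (w : Fin n → Y) :
    ∀ i j, 0 ≤ wordProd M w i j := by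
  refine listprod_nonneg _ fun A hA i j => ?_
  rw [List.mem_ofFn] at hA
  obtain ⟨k, rfl⟩ := hA
  exact hpos _ i j

lemma wordProd_cons {n : ℕ} (y : Y) (w : Fin n → Y) :
    wordProd M (Fin.cons y w) = M y * wordProd M w := by
  simp [wordProd, List.ofFn_succ]

lemma wordProd_append {k m : ℕ} (u : Fin k → Y) (t : Fin m → Y) :
    wordProd M (Fin.append u t) = wordProd M u * wordProd M t := by
  simp [wordProd, List.ofFn_add, Fin.append_left, Fin.append_right]

lemma sum_wordProd (n : ℕ) :
    ∑ w : Fin n → Y, wordProd M w = (∑ y, M y) ^ n := by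
  induction n with
  | zero =>
      rw [Fintype.sum_unique]
      simp [wordProd]
  | succ n ih =>
      rw [← (Fin.consEquiv (fun _ : Fin (n+1) => Y)).sum_comp (wordProd M)]
      have : ∀ p : Y × (Fin n → Y),
          wordProd M ((Fin.consEquiv (fun _ : Fin (n+1) => Y)) p) = M p.1 * wordProd M p.2 := by
        intro p; rw [← wordProd_cons]; rfl
      rw [Finset.sum_congr rfl (fun p _ => this p), Fintype.sum_prod_type]
      rw [pow_succ', ← ih, Finset.sum_mul]
      exact Finset.sum_congr rfl fun y _ => by rw [Finset.mul_sum]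

lemma vecMul_sum_mat {ι : Type*} (t : Finset ι) (α : Fin s → ℝ)
    (f : ι → Matrix (Fin s) (Fin s) ℝ) :
    α ᵥ* (∑ i ∈ t, f i) = ∑ i ∈ t, α ᵥ* f i := by
  funext j
  simp only [Matrix.vecMul, dotProduct, Matrix.sum_apply, Finset.sum_apply,
    Finset.mul_sum]
  exact Finset.sum_comm

end helpers

section conv
variable {s : ℕ}

lemma sum_vecMul_eq (α : Fin s → ℝ) (A : Matrix (Fin s) (Fin s) ℝ) :
    ∑ j, (α ᵥ* A) j = ∑ i, α i * (∑ j, A i j) := by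
  simp only [Matrix.vecMul, dotProduct, Finset.mul_sum]
  exact Finset.sum_comm

lemma rowsum_pow {A : Matrix (Fin s) (Fin s) ℝ} (h : ∀ i, ∑ j, A i j = 1) (n : ℕ) :
    ∀ i, ∑ j, (A ^ n) i j = 1 := by
  induction n with
  | zero => intro i; simp [Matrix.one_apply]
  | succ n ih =>
      intro i
      rw [pow_succ]
      simp only [Matrix.mul_apply]
      rw [Finset.sum_comm]
      calc ∑ j, ∑ l, (A ^ n) i j * A j l = ∑ j, (A ^ n) i j * ∑ l, A j l := by
            exact Finset.sum_congr rfl fun j _ => (Finset.mul_sum _ _ _).symm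
        _ = 1 := by simp only [h, mul_one]; exact ih i

lemma contraction {A : Matrix (Fin s) (Fin s) ℝ} {ε : ℝ} (hε : 0 ≤ ε)
    (hA : ∀ i j, ε ≤ A i j) (hrow : ∀ i, ∑ j, A i j = 1)
    {d : Fin s → ℝ} (hd : ∑ i, d i = 0) :
    ∑ j, |(d ᵥ* A) j| ≤ (1 - s * ε) * ∑ i, |d i| := by
  have key : ∀ j, (d ᵥ* A) j = ∑ i, d i * (A i j - ε) := by
    intro j
    simp only [Matrix.vecMul, dotProduct, mul_sub]
    rw [Finset.sum_sub_distrib, ← Finset.sum_mul, hd, zero_mul, sub_zero]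
  calc ∑ j, |(d ᵥ* A) j| ≤ ∑ j, ∑ i, |d i| * (A i j - ε) := by
        refine Finset.sum_le_sum fun j _ => ?_
        rw [key j]
        refine (Finset.abs_sum_le_sum_abs _ _).trans ?_
        refine Finset.sum_le_sum fun i _ => ?_
        rw [abs_mul, abs_of_nonneg (sub_nonneg.2 (hA i j))]
    _ = ∑ i, |d i| * (1 - s * ε) := by
        rw [Finset.sum_comm]
        refine Finset.sum_congr rfl fun i _ => ?_
        rw [← Finset.mul_sum, Finset.sum_sub_distrib, hrow i, Finset.sum_const,
          Finset.card_univ, Fintype.card_fin, nsmul_eq_mul]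
    _ = (1 - s * ε) * ∑ i, |d i| := by
        rw [Finset.mul_sum]; exact Finset.sum_congr rfl fun i _ => mul_comm _ _

lemma stat_pow {Mtot : Matrix (Fin s) (Fin s) ℝ} {π : Fin s → ℝ}
    (hstat : π ᵥ* Mtot = π) (n : ℕ) : π ᵥ* Mtot ^ n = π := by
  induction n with
  | zero => simp
  | succ n ih => rw [pow_succ, ← Matrix.vecMul_vecMul, ih, hstat]

lemma ell1_tendsto (hs : 0 < s) (Mtot : Matrix (Fin s) (Fin s) ℝ)
    (hnn : ∀ i j, 0 ≤ Mtot i j) (hrow : ∀ i, ∑ j, Mtot i j = 1)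
    (hap : ∃ k, ∀ i j, 0 < (Mtot ^ k) i j)
    (π α : Fin s → ℝ) (hπ1 : ∑ i, π i = 1) (hstat : π ᵥ* Mtot = π)
    (hα1 : ∑ i, α i = 1) :
    Tendsto (fun k : ℕ => ∑ j, |((α ᵥ* Mtot ^ k) - π) j|) atTop (𝓝 0) := by
  haveI : Nonempty (Fin s) := ⟨⟨0, hs⟩⟩
  obtain ⟨k₁, hk₁⟩ := hap
  set k₀ := k₁ + 1 with hk₀
  have hNpos : ∀ i j, 0 < (Mtot ^ k₀) i j := by
    intro i j
    rw [hk₀, pow_succ', Matrix.mul_apply]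
    have hex : ∃ l, 0 < Mtot i l := by
      by_contra hcon
      push_neg at hcon
      have : ∑ j, Mtot i j = 0 :=
        Finset.sum_eq_zero fun l _ => le_antisymm (hcon l) (hnn i l)
      rw [hrow i] at this; norm_num at this
    obtain ⟨l, hl⟩ := hex
    refine Finset.sum_pos' (fun l' _ => mul_nonneg (hnn i l') (le_of_lt (hk₁ l' j))) ?_
    exact ⟨l, Finset.mem_univ l, mul_pos hl (hk₁ l j)⟩
  set N := Mtot ^ k₀ with hN
  set ε := Finset.univ.inf' (Finset.univ_nonempty) (fun p : Fin s × Fin s => N p.1 p.2) with hε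
  have hεpos : 0 < ε := by
    rw [hε, Finset.lt_inf'_iff]
    exact fun p _ => hNpos p.1 p.2
  have hεle : ∀ i j, ε ≤ N i j := fun i j =>
    Finset.inf'_le _ (Finset.mem_univ (i, j))
  have hrowN : ∀ i, ∑ j, N i j = 1 := rowsum_pow hrow k₀
  have hsε : (s : ℝ) * ε ≤ 1 := by
    obtain ⟨i0⟩ := (inferInstance : Nonempty (Fin s))
    calc (s : ℝ) * ε = ∑ _j : Fin s, ε := by
          rw [Finset.sum_const, Finset.card_univ, Fintype.card_fin, nsmul_eq_mul]
      _ ≤ ∑ j, N i0 j := Finset.sum_le_sum fun j _ => hεle i0 j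
      _ = 1 := hrowN i0
  set c := 1 - (s : ℝ) * ε with hc
  have hc0 : 0 ≤ c := by rw [hc]; linarith
  have hc1 : c < 1 := by
    rw [hc]
    have : 0 < (s : ℝ) * ε := mul_pos (by exact_mod_cast hs) hεpos
    linarith
  set d : ℕ → Fin s → ℝ := fun k => (α ᵥ* Mtot ^ k) - π with hdd
  have hdz : ∀ k, ∑ i, d k i = 0 := by
    intro k
    simp only [hdd, Pi.sub_apply]
    rw [Finset.sum_sub_distrib, sum_vecMul_eq]
    simp only [rowsum_pow hrow k, mul_one]
    rw [hα1, hπ1, sub_self]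
  have hdstep : ∀ k, d (k + 1) = d k ᵥ* Mtot := by
    intro k
    rw [hdd]
    simp only
    rw [pow_succ, ← Matrix.vecMul_vecMul, Matrix.sub_vecMul, hstat]
  have hdN : ∀ k, d (k + k₀) = d k ᵥ* N := by
    intro k
    rw [hdd]
    simp only
    rw [pow_add, ← Matrix.vecMul_vecMul, Matrix.sub_vecMul, stat_pow hstat]
  set a : ℕ → ℝ := fun k => ∑ j, |d k j| with ha
  have hanon : ∀ k, 0 ≤ a k := fun k => Finset.sum_nonneg fun j _ => abs_nonneg _
  have hmono : Antitone a := by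
    refine antitone_nat_of_succ_le fun k => ?_
    have := contraction (le_refl (0:ℝ)) (by simpa using hnn) hrow (hdz k)
    rw [ha]; simp only
    rw [hdstep k]
    simpa using this
  have hgeom : ∀ q, a (q * k₀) ≤ c ^ q * a 0 := by
    intro q
    induction q with
    | zero => simp
    | succ q ih =>
        have h1 : a ((q + 1) * k₀) ≤ c * a (q * k₀) := by
          have heq : (q + 1) * k₀ = q * k₀ + k₀ := by ring
          rw [ha]; simp only [heq]
          rw [hdN (q * k₀)]
          exact contraction hεpos.le hεle hrowN (hdz _)
        calc a ((q + 1) * k₀) ≤ c * a (q * k₀) := h1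
          _ ≤ c * (c ^ q * a 0) := mul_le_mul_of_nonneg_left ih hc0
          _ = c ^ (q + 1) * a 0 := by ring
  have hbound : ∀ k, a k ≤ c ^ (k / k₀) * a 0 := by
    intro k
    have h1 : a k ≤ a (k / k₀ * k₀) :=
      hmono (Nat.div_mul_le_self k k₀)
    exact h1.trans (hgeom (k / k₀))
  have htend : Tendsto (fun k : ℕ => c ^ (k / k₀) * a 0) atTop (𝓝 0) := by
    have h1 : Tendsto (fun q : ℕ => c ^ q * a 0) atTop (𝓝 0) := by
      simpa using (tendsto_pow_atTop_nhds_zero_of_lt_one hc0 hc1).mul_const (a 0)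
    have h2 : Tendsto (fun k : ℕ => k / k₀) atTop atTop := by
      exact le_of_eq (Filter.map_div_atTop_eq_nat k₀ (Nat.succ_pos k₁))
    exact h1.comp h2
  exact squeeze_zero hanon hbound htend

end conv

/-- If `M` is aperiodic with stationary distribution `π`, then under the construction,
`liminf_{k→∞} P^{k+m}(α, 𝒪) ≥ (1 − 2√δₙ) π Sₙ e > 0` for every `α ∈ Δ`; in particular,
taking `α = v`, the point `v` is topologically aperiodic: `liminf_k Pᵏ(v, 𝒪) > 0`. -/
theorem stmt12 (s : ℕ) (Y : Type*) [Fintype Y]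
    (M : Y → Matrix (Fin s) (Fin s) ℝ)
    (hpos : ∀ y i j, 0 ≤ M y i j)
    (Mtot : Matrix (Fin s) (Fin s) ℝ) (hMtot : Mtot = ∑ y, M y)
    (hstoch : ∀ i, ∑ j, Mtot i j = 1)
    (hap : ∃ k, ∀ i j, 0 < (Mtot ^ k) i j)
    (π : Fin s → ℝ) (hπ : π ∈ stdSimplex ℝ (Fin s)) (hstat : π ᵥ* Mtot = π)
    (z ys : List Y)
    (S : Matrix (Fin s) (Fin s) ℝ) (hSdef : S = ((z ++ ys).map M).prod)
    (hπS : 0 < ∑ j, (π ᵥ* S) j)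
    (w v : Fin s → ℝ) (hw : π ⬝ᵥ w = 1) (hv : v ∈ stdSimplex ℝ (Fin s))
    (δ : ℝ) (hδ0 : 0 ≤ δ) (hδ : δ < 1 / 4)
    (T : Matrix (Fin s) (Fin s) ℝ)
    (hT : ∀ β : Fin s → ℝ, ∑ j, |(β ᵥ* T) j| ≤ ∑ i, |β i|)
    (hdecomp : (∑ j, (π ᵥ* S) j)⁻¹ • S = (Matrix.of fun i j => w i * v j) + δ • T)
    (O : Set (Fin s → ℝ))
    (hO : ∀ β : Fin s → ℝ, (∑ i, |β i|) ≤ 1 →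
      (1 + Real.sqrt δ * ∑ j, β j)⁻¹ • (v + Real.sqrt δ • β) ∈ O)
    (t : ℝ) (ht : t = 2 * Real.sqrt δ * ∑ j, (π ᵥ* S) j)
    (m : ℕ) (hm : m = (z ++ ys).length) :
    0 < (1 - 2 * Real.sqrt δ) * ∑ j, (π ᵥ* S) j ∧
    (∀ α ∈ stdSimplex ℝ (Fin s),
      (1 - 2 * Real.sqrt δ) * (∑ j, (π ᵥ* S) j) ≤
        Filter.liminf (fun k => Pker M (k + m) α O) Filter.atTop) ∧
    0 < Filter.liminf (fun k => Pker M k v O) Filter.atTop := by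
  obtain ⟨hπ0, hπ1⟩ := hπ
  have hv0 : ∀ i, 0 ≤ v i := hv.1
  have hv1 : ∑ i, v i = 1 := hv.2
  subst hm
  have hs : 0 < s := by
    rcases Nat.eq_zero_or_pos s with h | h
    · exfalso; subst h; simpa using hπS
    · exact h
  have hMnn : ∀ i j, 0 ≤ Mtot i j := by
    intro i j
    rw [hMtot, Matrix.sum_apply]
    exact Finset.sum_nonneg fun y _ => hpos y i j
  set rδ := Real.sqrt δ with hrδdef
  have h0r : 0 ≤ rδ := Real.sqrt_nonneg δ
  have hr2 : rδ * rδ = δ := Real.mul_self_sqrt hδ0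
  have hrlt : rδ < 1/2 := by
    rw [hrδdef, show (1:ℝ)/2 = Real.sqrt (1/4) by
      rw [show (1:ℝ)/4 = (1/2)^2 by norm_num, Real.sqrt_sq (by norm_num)]]
    exact Real.sqrt_lt_sqrt hδ0 hδ
  have hδr : δ ≤ rδ := by nlinarith
  set c := ∑ j, (π ᵥ* S) j with hcdef
  have hc : 0 < c := hπS
  have ht₀ : wordProd M (z ++ ys).get = S := by
    rw [hSdef]
    unfold wordProd
    exact congrArg List.prod (List.ofFn_getElem_eq_map _ _)
  -- the core per-word estimate
  have hcore : ∀ (β : Fin s → ℝ), (∀ i, 0 ≤ β i) → rδ * (∑ i, β i) ≤ β ⬝ᵥ w →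
      c * (β ⬝ᵥ w - δ * ∑ i, β i) ≤
        (if ((∑ j, (β ᵥ* S) j)⁻¹ • (β ᵥ* S)) ∈ O then ∑ j, (β ᵥ* S) j else 0) := by
    intro β hβ0 hgood
    have hSij : ∀ i j, S i j = c * (w i * v j + δ * T i j) := by
      intro i j
      have h := congrFun (congrFun hdecomp i) j
      simp only [Matrix.smul_apply, Matrix.add_apply, Matrix.of_apply, smul_eq_mul] at h
      rw [← h, mul_inv_cancel_left₀ hc.ne']
    have he0 : 0 ≤ ∑ i, β i := Finset.sum_nonneg fun i _ => hβ0 i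
    have hβS : ∀ j, (β ᵥ* S) j = c * ((β ⬝ᵥ w) * v j + δ * (β ᵥ* T) j) := by
      intro j
      have h1 : (β ᵥ* S) j = ∑ i, β i * S i j := rfl
      have h2 : ∀ i, β i * S i j = c * ((β i * w i) * v j) + c * (δ * (β i * T i j)) :=
        fun i => by rw [hSij i j]; ring
      rw [h1, Finset.sum_congr rfl fun i _ => h2 i, Finset.sum_add_distrib,
        ← Finset.mul_sum, ← Finset.mul_sum, ← Finset.sum_mul, ← Finset.mul_sum, ← mul_add]
      rfl
    have hmass : ∑ j, (β ᵥ* S) j = c * ((β ⬝ᵥ w) + δ * ∑ j, (β ᵥ* T) j) := by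
      rw [Finset.sum_congr rfl fun j _ => hβS j, ← Finset.mul_sum,
        Finset.sum_add_distrib, ← Finset.mul_sum, ← Finset.mul_sum, hv1, mul_one]
    have hqle : ∑ j, |(β ᵥ* T) j| ≤ ∑ i, β i :=
      (hT β).trans_eq (Finset.sum_congr rfl fun i _ => abs_of_nonneg (hβ0 i))
    have hσ : -(∑ i, β i) ≤ ∑ j, (β ᵥ* T) j := by
      calc -(∑ i, β i) ≤ -∑ j, |(β ᵥ* T) j| := neg_le_neg hqle
        _ = ∑ j, -|(β ᵥ* T) j| := by rw [Finset.sum_neg_distrib]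
        _ ≤ ∑ j, (β ᵥ* T) j := Finset.sum_le_sum fun j _ => neg_abs_le _
    rcases eq_or_lt_of_le he0 with he | he
    · have hβz : ∀ i, β i = 0 := fun i =>
        (Finset.sum_eq_zero_iff_of_nonneg (fun i _ => hβ0 i)).1 he.symm i (Finset.mem_univ i)
      have hp : β ⬝ᵥ w = 0 := by simp [dotProduct, hβz]
      have hq : ∀ j, (β ᵥ* T) j = 0 := by
        intro j; simp [Matrix.vecMul, dotProduct, hβz]
      have hm0 : ∑ j, (β ᵥ* S) j = 0 := by rw [hmass, hp]; simp [hq]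
      rw [hp, ← he, hm0]
      split_ifs <;> simp
    · have hp0 : 0 ≤ β ⬝ᵥ w := le_trans (mul_nonneg h0r he0) hgood
      rcases eq_or_lt_of_le hp0 with hp | hp
      · have hrz : rδ = 0 := by nlinarith
        have hδz : δ = 0 := by rw [← hr2, hrz]; ring
        have hm0 : ∑ j, (β ᵥ* S) j = 0 := by rw [hmass, ← hp, hδz]; ring
        rw [← hp, hδz, hm0]
        split_ifs <;> simp
      · set p := β ⬝ᵥ w with hpd
        set q := β ᵥ* T with hqd
        set e := ∑ i, β i with hed
        have hcp : (0:ℝ) < c * p := mul_pos hc hp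
        set β' := fun j => (rδ / p) * q j with hβ'd
        have hβ'sum : ∑ i, |β' i| ≤ 1 := by
          have h1 : ∑ i, |β' i| = (rδ / p) * ∑ i, |q i| := by
            rw [Finset.mul_sum]
            exact Finset.sum_congr rfl fun i _ => by
              rw [hβ'd]
              simp only
              rw [abs_mul, abs_of_nonneg (div_nonneg h0r hp.le)]
          rw [h1, div_mul_eq_mul_div, div_le_one hp]
          calc rδ * ∑ i, |q i| ≤ rδ * e := mul_le_mul_of_nonneg_left hqle h0r
            _ ≤ p := hgood
        have hmem := hO β' hβ'sum
        have hσ' : ∑ j, β' j = (rδ / p) * ∑ j, q j := by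
          rw [hβ'd, ← Finset.mul_sum]
        have hvec : (β ᵥ* S) = (c * p) • (v + rδ • β') := by
          funext j
          simp only [Pi.smul_apply, Pi.add_apply, smul_eq_mul, hβ'd]
          rw [hβS j]
          have hh : rδ * (rδ / p * q j) = δ * q j / p := by
            rw [← hr2]; field_simp
          rw [hh]
          field_simp
        have hms : ∑ j, (β ᵥ* S) j = (c * p) * (1 + rδ * ∑ j, β' j) := by
          rw [hmass, hσ']
          have hh : rδ * (rδ / p * ∑ j, q j) = δ * (∑ j, q j) / p := by
            rw [← hr2]; field_simp
          rw [hh]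
          field_simp
        have hptmem : ((∑ j, (β ᵥ* S) j)⁻¹ • (β ᵥ* S)) ∈ O := by
          rw [hms, hvec, mul_inv, smul_smul, mul_comm ((c*p)⁻¹) _, mul_assoc,
            inv_mul_cancel₀ hcp.ne', mul_one]
          exact hmem
        rw [if_pos hptmem, hmass]
        have h2 : p - δ * e ≤ p + δ * ∑ j, q j := by nlinarith [hσ, hδ0]
        exact mul_le_mul_of_nonneg_left h2 hc.le
  -- sums of the chains
  have hβsum : ∀ (α : Fin s → ℝ) (n : ℕ) (i : Fin s),
      ∑ u : Fin n → Y, (α ᵥ* wordProd M u) i = (α ᵥ* Mtot ^ n) i := by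
    intro α n i
    rw [hMtot, ← sum_wordProd, vecMul_sum_mat]
    simp [Finset.sum_apply]
  have hPtot : ∀ (α : Fin s → ℝ), (∑ i, α i = 1) → ∀ n : ℕ,
      ∑ u : Fin n → Y, (∑ j, (α ᵥ* wordProd M u) j) = 1 := by
    intro α hα1 n
    rw [Finset.sum_comm]
    calc ∑ j, ∑ u : Fin n → Y, (α ᵥ* wordProd M u) j = ∑ j, (α ᵥ* Mtot ^ n) j :=
          Finset.sum_congr rfl fun j _ => hβsum α n j
      _ = ∑ i, α i * (∑ j, (Mtot ^ n) i j) := sum_vecMul_eq α (Mtot ^ n)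
      _ = 1 := by simp only [rowsum_pow hstoch n, mul_one]; exact hα1
  have hPkerle : ∀ (α : Fin s → ℝ), (∀ i, 0 ≤ α i) → (∑ i, α i = 1) → ∀ n : ℕ,
      Pker M n α O ≤ 1 := by
    intro α hα0 hα1 n
    unfold Pker
    calc ∑ u : Fin n → Y,
        (if ((∑ j, (α ᵥ* wordProd M u) j)⁻¹ • (α ᵥ* wordProd M u)) ∈ O
          then ∑ j, (α ᵥ* wordProd M u) j else 0)
        ≤ ∑ u : Fin n → Y, ∑ j, (α ᵥ* wordProd M u) j := by
          refine Finset.sum_le_sum fun u _ => ?_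
          split_ifs
          · exact le_refl _
          · refine Finset.sum_nonneg fun j _ => ?_
            have hh : (α ᵥ* wordProd M u) j = ∑ i, α i * wordProd M u i j := rfl
            rw [hh]
            exact Finset.sum_nonneg fun i _ =>
              mul_nonneg (hα0 i) (wordProd_nonneg M hpos u i j)
      _ = 1 := hPtot α hα1 n
  have key : ∀ (α : Fin s → ℝ), (∀ i, 0 ≤ α i) → (∑ i, α i = 1) → ∀ k : ℕ,
      c * (((α ᵥ* Mtot ^ k) ⬝ᵥ w) - rδ) ≤ Pker M (k + (z ++ ys).length) α O := by
    intro α hα0 hα1 k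
    have hβnn : ∀ {n : ℕ} (u : Fin n → Y) (j : Fin s), 0 ≤ (α ᵥ* wordProd M u) j := by
      intro n u j
      have hh : (α ᵥ* wordProd M u) j = ∑ i, α i * wordProd M u i j := rfl
      rw [hh]
      exact Finset.sum_nonneg fun i _ => mul_nonneg (hα0 i) (wordProd_nonneg M hpos u i j)
    have hitenn : ∀ {n : ℕ} (u : Fin n → Y),
        0 ≤ (if ((∑ j, (α ᵥ* wordProd M u) j)⁻¹ • (α ᵥ* wordProd M u)) ∈ O
          then ∑ j, (α ᵥ* wordProd M u) j else 0) := by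
      intro n u
      split_ifs
      · exact Finset.sum_nonneg fun j _ => hβnn u j
      · exact le_refl 0
    set pfun : (Fin k → Y) → ℝ := fun u => (α ᵥ* wordProd M u) ⬝ᵥ w with hpf
    set efun : (Fin k → Y) → ℝ := fun u => ∑ i, (α ᵥ* wordProd M u) i with hef
    set G : Finset (Fin k → Y) := Finset.univ.filter (fun u => rδ * efun u ≤ pfun u) with hGd
    set Gc : Finset (Fin k → Y) :=
      Finset.univ.filter (fun u => ¬ rδ * efun u ≤ pfun u) with hGcd
    have hsplitp : (∑ u ∈ G, pfun u) + ∑ u ∈ Gc, pfun u = ∑ u, pfun u := by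
      rw [hGd, hGcd]
      exact Finset.sum_filter_add_sum_filter_not _ _ _
    have hsplite : (∑ u ∈ G, efun u) + ∑ u ∈ Gc, efun u = ∑ u, efun u := by
      rw [hGd, hGcd]
      exact Finset.sum_filter_add_sum_filter_not _ _ _
    have hsumtot_p : ∑ u, pfun u = (α ᵥ* Mtot ^ k) ⬝ᵥ w := by
      simp only [hpf]
      simp only [dotProduct]
      rw [Finset.sum_comm]
      exact Finset.sum_congr rfl fun i _ => by rw [← Finset.sum_mul, hβsum α k i]
    have hsumtot_e : ∑ u, efun u = 1 := by
      simp only [hef]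
      exact hPtot α hα1 k
    have hbadp : ∑ u ∈ Gc, pfun u ≤ rδ * ∑ u ∈ Gc, efun u := by
      rw [Finset.mul_sum]
      refine Finset.sum_le_sum fun u hu => ?_
      rw [hGcd, Finset.mem_filter] at hu
      exact (not_le.1 hu.2).le
    have hBnn : 0 ≤ ∑ u ∈ G, efun u :=
      Finset.sum_nonneg fun u _ => Finset.sum_nonneg fun i _ => hβnn u i
    have hB'nn : 0 ≤ ∑ u ∈ Gc, efun u :=
      Finset.sum_nonneg fun u _ => Finset.sum_nonneg fun i _ => hβnn u i
    have hGsum : c * (((α ᵥ* Mtot ^ k) ⬝ᵥ w) - rδ) ≤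
        ∑ u ∈ G, c * (pfun u - δ * efun u) := by
      rw [← Finset.mul_sum]
      refine mul_le_mul_of_nonneg_left ?_ hc.le
      rw [Finset.sum_sub_distrib, ← Finset.mul_sum]
      rw [hsumtot_p] at hsplitp
      rw [hsumtot_e] at hsplite
      have e1 : δ * (∑ u ∈ G, efun u) ≤ rδ * (∑ u ∈ G, efun u) :=
        mul_le_mul_of_nonneg_right hδr hBnn
      have e2 : rδ * (∑ u ∈ G, efun u) + rδ * (∑ u ∈ Gc, efun u) = rδ := by
        rw [← mul_add, hsplite, mul_one]
      linarith [hsplitp, hbadp, e1, e2]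
    have hGbound : ∀ u ∈ G,
        c * (pfun u - δ * efun u) ≤
        (if ((∑ j, (α ᵥ* wordProd M (Fin.append u (z ++ ys).get)) j)⁻¹ •
              (α ᵥ* wordProd M (Fin.append u (z ++ ys).get))) ∈ O
          then ∑ j, (α ᵥ* wordProd M (Fin.append u (z ++ ys).get)) j else 0) := by
      intro u hu
      rw [hGd, Finset.mem_filter] at hu
      have hrw : α ᵥ* wordProd M (Fin.append u (z ++ ys).get)
          = (α ᵥ* wordProd M u) ᵥ* S := by
        rw [wordProd_append, ht₀, ← Matrix.vecMul_vecMul]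
      rw [hrw]
      exact hcore (α ᵥ* wordProd M u) (hβnn u) hu.2
    calc c * (((α ᵥ* Mtot ^ k) ⬝ᵥ w) - rδ)
        ≤ ∑ u ∈ G, c * (pfun u - δ * efun u) := hGsum
      _ ≤ ∑ u ∈ G,
          (if ((∑ j, (α ᵥ* wordProd M (Fin.append u (z ++ ys).get)) j)⁻¹ •
              (α ᵥ* wordProd M (Fin.append u (z ++ ys).get))) ∈ O
            then ∑ j, (α ᵥ* wordProd M (Fin.append u (z ++ ys).get)) j else 0) :=
          Finset.sum_le_sum hGbound
      _ ≤ ∑ u : Fin k → Y,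
          (if ((∑ j, (α ᵥ* wordProd M (Fin.append u (z ++ ys).get)) j)⁻¹ •
              (α ᵥ* wordProd M (Fin.append u (z ++ ys).get))) ∈ O
            then ∑ j, (α ᵥ* wordProd M (Fin.append u (z ++ ys).get)) j else 0) :=
          Finset.sum_le_sum_of_subset_of_nonneg (Finset.subset_univ G)
            (fun u _ _ => hitenn _)
      _ ≤ ∑ u : Fin k → Y, ∑ τ : Fin (z ++ ys).length → Y,
          (if ((∑ j, (α ᵥ* wordProd M (Fin.append u τ)) j)⁻¹ •
              (α ᵥ* wordProd M (Fin.append u τ))) ∈ O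
            then ∑ j, (α ᵥ* wordProd M (Fin.append u τ)) j else 0) :=
          Finset.sum_le_sum fun u _ =>
            Finset.single_le_sum (f := fun τ : Fin (z ++ ys).length → Y =>
              (if ((∑ j, (α ᵥ* wordProd M (Fin.append u τ)) j)⁻¹ •
                  (α ᵥ* wordProd M (Fin.append u τ))) ∈ O
                then ∑ j, (α ᵥ* wordProd M (Fin.append u τ)) j else 0))
              (fun τ _ => hitenn _) (Finset.mem_univ ((z ++ ys).get))
      _ = Pker M (k + (z ++ ys).length) α O := by
          unfold Pker
          rw [← Equiv.sum_comp (Fin.appendEquiv k (z ++ ys).length)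
            (fun w' => if ((∑ j, (α ᵥ* wordProd M w') j)⁻¹ • (α ᵥ* wordProd M w')) ∈ O
              then ∑ j, (α ᵥ* wordProd M w') j else 0), Fintype.sum_prod_type]
          rfl
  have hW := ell1_tendsto hs Mtot hMnn hstoch hap π
  have hmain : ∀ α ∈ stdSimplex ℝ (Fin s),
      (1 - 2 * rδ) * c ≤ liminf (fun k => Pker M (k + (z ++ ys).length) α O) atTop := by
    intro α hα
    have hα0 : ∀ i, 0 ≤ α i := hα.1
    have hα1 : ∑ i, α i = 1 := hα.2
    have hdiff : Tendsto (fun k : ℕ => ((α ᵥ* Mtot ^ k) ⬝ᵥ w) - 1) atTop (𝓝 0) := by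
      apply squeeze_zero_norm
        (a := fun k => (∑ j, |((α ᵥ* Mtot ^ k) - π) j|) * ∑ i, |w i|)
      · intro k
        have h1 : ((α ᵥ* Mtot ^ k) ⬝ᵥ w) - 1 = ∑ i, ((α ᵥ* Mtot ^ k) - π) i * w i := by
          rw [← hw]
          simp only [dotProduct, Pi.sub_apply, sub_mul]
          rw [Finset.sum_sub_distrib]
        rw [Real.norm_eq_abs, h1]
        calc |∑ i, ((α ᵥ* Mtot ^ k) - π) i * w i|
            ≤ ∑ i, |((α ᵥ* Mtot ^ k) - π) i| * |w i| := by
              refine (Finset.abs_sum_le_sum_abs _ _).trans ?_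
              exact le_of_eq (Finset.sum_congr rfl fun i _ => abs_mul _ _)
          _ ≤ ∑ i, (∑ l, |((α ᵥ* Mtot ^ k) - π) l|) * |w i| :=
              Finset.sum_le_sum fun i _ => mul_le_mul_of_nonneg_right
                (Finset.single_le_sum (f := fun l => |((α ᵥ* Mtot ^ k) - π) l|)
                  (fun l _ => abs_nonneg _) (Finset.mem_univ i))
                (abs_nonneg _)
          _ = (∑ l, |((α ᵥ* Mtot ^ k) - π) l|) * ∑ i, |w i| := by
              rw [← Finset.mul_sum]
      · have h0 := (hW α hπ1 hstat hα1).mul_const (∑ i, |w i|)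
        rw [zero_mul] at h0
        exact h0
    have htend1 : Tendsto (fun k : ℕ => (α ᵥ* Mtot ^ k) ⬝ᵥ w) atTop (𝓝 1) := by
      have h := hdiff.add_const 1
      simpa using h
    have hlowt : Tendsto (fun k : ℕ => c * (((α ᵥ* Mtot ^ k) ⬝ᵥ w) - rδ)) atTop
        (𝓝 (c * (1 - rδ))) := ((htend1.sub_const rδ).const_mul c)
    have hlim : c * (1 - rδ) ≤ liminf (fun k => Pker M (k + (z ++ ys).length) α O) atTop := by
      rw [← hlowt.liminf_eq]
      refine Filter.liminf_le_liminf (Filter.Eventually.of_forall fun k => key α hα0 hα1 k)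
        hlowt.isBoundedUnder_ge ?_
      exact Filter.IsBoundedUnder.isCoboundedUnder_ge
        (Filter.isBoundedUnder_of ⟨1, fun k => hPkerle α hα0 hα1 _⟩)
    calc (1 - 2 * rδ) * c ≤ c * (1 - rδ) := by linarith [mul_nonneg hc.le h0r]
      _ ≤ _ := hlim
  have hfirst : 0 < (1 - 2 * rδ) * c := mul_pos (by linarith) hc
  refine ⟨hfirst, hmain, ?_⟩
  rw [← Filter.liminf_nat_add (fun k => Pker M k v O) (z ++ ys).length]
  exact lt_of_lt_of_le hfirst (hmain v hv)
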